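/- The product space {0,1}^κ, where κ = (2^ℵ₀)⁺ is the successor cardinal of the continuum and {0,1} carries the discrete topology, is compact but not e-separable. -/

import Mathlib

open Cardinal Set

universe u

/-- A subset `D` of a topological space is closed discrete iff it is closed and
its subspace topology is discrete. -/
def ClosedDiscrete {X : Type u} [TopologicalSpace X] (D : Set X) : Prop :=
  IsClosed D ∧ DiscreteTopology D

/-- A space is `e`-separable iff it has a dense set which is a countable union of
closed discrete sets. -/
def ESeparable (X : Type u) [TopologicalSpace X] : Prop :=
  ∃ D : ℕ → Set X, (∀ n, ClosedDiscrete (D n)) ∧ Dense (⋃ n, D n)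

/-- The density of a space: the least cardinality of a dense subset. -/
noncomputable def density (X : Type u) [TopologicalSpace X] : Cardinal.{u} :=
  sInf {c | ∃ D : Set X, Dense D ∧ #D = c}

/-- The extent of a space: the supremum of the cardinalities of closed discrete subsets. -/
noncomputable def extent (X : Type u) [TopologicalSpace X] : Cardinal.{u} :=
  sSup {c | ∃ D : Set X, ClosedDiscrete D ∧ #D = c}

/-- `{0,1}^{𝔠⁺}` is compact but not `e`-separable. -/
theorem two_pow_continuum_succ_compact_not_eSeparable :
    CompactSpace ((Order.succ (2 ^ ℵ₀ : Cardinal.{0})).out → Bool) ∧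
      ¬ ESeparable ((Order.succ (2 ^ ℵ₀ : Cardinal.{0})).out → Bool) := by
  set κ := (Order.succ (2 ^ ℵ₀ : Cardinal.{0})).out with hκ
  refine ⟨inferInstance, ?_⟩
  rintro ⟨D, hD, hdense⟩
  -- each D n is finite since it's a closed discrete subset of a compact space
  have hfin : ∀ n, (D n).Finite := fun n =>
    ((hD n).1.isCompact).finite (isDiscrete_iff_discreteTopology.mpr (hD n).2)
  set U : Set (κ → Bool) := ⋃ n, D n with hUdef
  have hU : U.Countable := countable_iUnion fun n => (hfin n).countable
  -- injection from κ into Set U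
  have hinj : Function.Injective
      (fun i : κ => {d : U | (d : κ → Bool) i = true}) := by
    intro i j hij
    by_contra hne
    classical
    have hopen : IsOpen ((fun x : κ → Bool => x i) ⁻¹' {true} ∩
        (fun x : κ → Bool => x j) ⁻¹' {false}) :=
      ((isOpen_discrete _).preimage (continuous_apply i)).inter
        ((isOpen_discrete _).preimage (continuous_apply j))
    have hne' : ((fun x : κ → Bool => x i) ⁻¹' {true} ∩
        (fun x : κ → Bool => x j) ⁻¹' {false}).Nonempty := by
      refine ⟨fun k => if k = i then true else false, ?_, ?_⟩
      · show (if i = i then true else false) ∈ ({true} : Set Bool)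
        rw [if_pos rfl]; exact rfl
      · show (if j = i then true else false) ∈ ({false} : Set Bool)
        rw [if_neg (fun h => hne h.symm)]; exact rfl
    obtain ⟨d, hdU, hd⟩ := hdense.exists_mem_open hopen hne'
    have hdi : d i = true := hd.1
    have hdj : d j = false := hd.2
    have hij2 : {d : U | (d : κ → Bool) i = true} = {d : U | (d : κ → Bool) j = true} := hij
    have hmem : (⟨d, hdU⟩ : U) ∈ {d : U | (d : κ → Bool) i = true} := hdi
    rw [hij2] at hmem
    simp only [Set.mem_setOf_eq] at hmem
    simp [hmem] at hdj
  have h1 : #κ ≤ #(Set U) := Cardinal.mk_le_of_injective hinj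
  have h2 : #(Set U) = 2 ^ #U := Cardinal.mk_set
  haveI := hU.to_subtype
  have h3 : #U ≤ ℵ₀ := Cardinal.mk_le_aleph0
  have h4 : (2 : Cardinal) ^ #U ≤ 2 ^ ℵ₀ :=
    Cardinal.power_le_power_left two_ne_zero h3
  have h5 : #κ ≤ 2 ^ ℵ₀ := h1.trans (h2 ▸ h4)
  rw [hκ, Cardinal.mk_out] at h5
  exact absurd h5 (not_le.mpr (Order.lt_succ _))
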